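/- Let V and H be separable real Hilbert spaces with a continuous and dense embedding V ↪ H, let L : V → H be a bounded linear operator with ‖L v‖_H = ‖v‖_V for all v ∈ V with adjoint L* : H → V', let F : V → V' be Fréchet differentiable and monotone with monotone derivatives DF[w] for every w ∈ V, let ε > 0, and let Q_ε(w) = F(w) + ε L*L w, which is a bijection from V onto V'. Then the inverse R_ε := Q_ε^{-1} : V' → V satisfies: (i) R_ε is Lipschitz continuous with ‖R_ε(v₁) − R_ε(v₂)‖_V ≤ ε^{-1} ‖v₁ − v₂‖_{V'} for all v₁, v₂ ∈ V'; (ii) R_ε is strictly monotone: ⟨v − w, R_ε(v) − R_ε(w)⟩_{V',V} ≥ ε ‖R_ε(v) − R_ε(w)‖_V² for all v, w ∈ V', and this quantity is strictly positive whenever v ≠ w; (iii) R_ε is Fréchet differentiable with DR_ε[v] = (DQ_ε[R_ε(v)])^{-1} for every v ∈ V', and ‖DR_ε[v](ξ)‖_V ≤ ε^{-1} ‖ξ‖_{V'} for all v, ξ ∈ V'. -/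

import Mathlib

local notation "⟪" x ", " y "⟫" => @inner ℝ _ _ x y

set_option maxHeartbeats 1000000 in
/-- In the setting of Statement 4 (continuous dense embedding `V ↪ H`,
`L : V → H` with `‖L v‖_H = ‖v‖_V`, `B = L*L`, `F : V → V'` Fréchet differentiable and
monotone with monotone derivatives, `ε > 0`, `Q_ε = F + ε L*L` a bijection from `V` onto `V'`),
the inverse `R_ε := Q_ε⁻¹ : V' → V` satisfies:
(i) `‖R_ε(v₁) − R_ε(v₂)‖_V ≤ ε⁻¹ ‖v₁ − v₂‖_{V'}`;
(ii) `⟨v − w, R_ε(v) − R_ε(w)⟩ ≥ ε ‖R_ε(v) − R_ε(w)‖_V²`, strictly positive for `v ≠ w`;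
(iii) `R_ε` is Fréchet differentiable with `DR_ε[v] = (DQ_ε[R_ε(v)])⁻¹` and
`‖DR_ε[v](ξ)‖_V ≤ ε⁻¹ ‖ξ‖_{V'}`. -/
theorem stmt_5
    {V H : Type*} [NormedAddCommGroup V] [InnerProductSpace ℝ V] [CompleteSpace V]
    [NormedAddCommGroup H] [InnerProductSpace ℝ H] [CompleteSpace H]
    [TopologicalSpace.SeparableSpace V] [TopologicalSpace.SeparableSpace H]
    (e : V →L[ℝ] H) (he_inj : Function.Injective e) (he_dense : DenseRange e)
    (L : V →L[ℝ] H) (hL : ∀ v : V, ‖L v‖ = ‖v‖)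
    (B : V →L[ℝ] (V →L[ℝ] ℝ)) (hB : ∀ w v : V, B w v = ⟪L w, L v⟫)
    (F : V → (V →L[ℝ] ℝ)) (hFdiff : Differentiable ℝ F)
    (hFmono : ∀ v w : V, 0 ≤ (F v - F w) (v - w))
    (hDFmono : ∀ w ξ : V, 0 ≤ fderiv ℝ F w ξ ξ)
    (ε : ℝ) (hε : 0 < ε)
    (Q : V → (V →L[ℝ] ℝ)) (hQ : ∀ w : V, Q w = F w + ε • B w)
    (hQbij : Function.Bijective Q)
    (R : (V →L[ℝ] ℝ) → V) (hRQ : ∀ w : V, R (Q w) = w)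
    (hQR : ∀ f : V →L[ℝ] ℝ, Q (R f) = f) :
    (∀ v₁ v₂ : V →L[ℝ] ℝ, ‖R v₁ - R v₂‖ ≤ ε⁻¹ * ‖v₁ - v₂‖) ∧
    (∀ v w : V →L[ℝ] ℝ, ε * ‖R v - R w‖ ^ 2 ≤ (v - w) (R v - R w)) ∧
    (∀ v w : V →L[ℝ] ℝ, v ≠ w → 0 < (v - w) (R v - R w)) ∧
    (∀ v : V →L[ℝ] ℝ, ∃ D : (V →L[ℝ] ℝ) →L[ℝ] V,
      HasFDerivAt R D v ∧
      (∀ ξ : V →L[ℝ] ℝ, (fderiv ℝ F (R v) + ε • B) (D ξ) = ξ) ∧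
      (∀ u : V, D ((fderiv ℝ F (R v) + ε • B) u) = u) ∧
      (∀ ξ : V →L[ℝ] ℝ, ‖D ξ‖ ≤ ε⁻¹ * ‖ξ‖)) := by
  -- `B u u = ‖u‖²`
  have hBu : ∀ u : V, B u u = ‖u‖ ^ 2 := by
    intro u
    rw [hB, real_inner_self_eq_norm_sq, hL]
  -- key coercivity of `Q`
  have hQcoer : ∀ a b : V, ε * ‖a - b‖ ^ 2 ≤ (Q a - Q b) (a - b) := by
    intro a b
    have h1 : (Q a - Q b) (a - b) = (F a - F b) (a - b) + ε * B (a - b) (a - b) := by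
      simp [hQ, map_sub, smul_sub]
      ring
    rw [h1, hBu]
    have := hFmono a b
    linarith
  -- (ii)
  have h2 : ∀ v w : V →L[ℝ] ℝ, ε * ‖R v - R w‖ ^ 2 ≤ (v - w) (R v - R w) := by
    intro v w
    have := hQcoer (R v) (R w)
    rwa [hQR, hQR] at this
  -- (i)
  have h1 : ∀ v₁ v₂ : V →L[ℝ] ℝ, ‖R v₁ - R v₂‖ ≤ ε⁻¹ * ‖v₁ - v₂‖ := by
    intro v w
    rcases eq_or_lt_of_le (norm_nonneg (R v - R w)) with h | h
    · rw [← h]; positivity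
    · have hle : ε * ‖R v - R w‖ ^ 2 ≤ ‖v - w‖ * ‖R v - R w‖ :=
        (h2 v w).trans ((Real.le_norm_self _).trans ((v - w).le_opNorm _))
      have hεd : ε * ‖R v - R w‖ ≤ ‖v - w‖ := by nlinarith
      calc ‖R v - R w‖ = ε⁻¹ * (ε * ‖R v - R w‖) := by field_simp
        _ ≤ ε⁻¹ * ‖v - w‖ :=
          mul_le_mul_of_nonneg_left hεd (inv_pos.mpr hε).le
  refine ⟨h1, h2, ?_, ?_⟩
  · -- strict positivity
    intro v w hvw
    have hR : R v ≠ R w := fun h => hvw (by rw [← hQR v, ← hQR w, h])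
    have hn : 0 < ‖R v - R w‖ := by
      simpa [sub_eq_zero] using hR
    have := h2 v w
    have hp : 0 < ε * ‖R v - R w‖ ^ 2 := mul_pos hε (pow_pos hn 2)
    linarith
  · -- differentiability
    intro v
    set A : V →L[ℝ] (V →L[ℝ] ℝ) := fderiv ℝ F (R v) + ε • B with hA
    have hAcoer : ∀ u : V, ε * ‖u‖ ^ 2 ≤ A u u := by
      intro u
      have h0 := hDFmono (R v) u
      have : A u u = fderiv ℝ F (R v) u u + ε * B u u := by simp [hA]
      rw [this, hBu]
      linarith
    -- coercivity in Lax-Milgram form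
    have hcoer : IsCoercive A := by
      refine ⟨ε, hε, fun u => ?_⟩
      have := hAcoer u
      nlinarith [norm_nonneg u]
    -- injectivity of A
    have hAinj : Function.Injective A := by
      intro a b hab
      have h0 : A (a - b) = 0 := by rw [map_sub, hab, sub_self]
      have hco := hAcoer (a - b)
      rw [h0] at hco
      simp only [ContinuousLinearMap.zero_apply] at hco
      have hx : ‖a - b‖ ^ 2 ≤ 0 := by nlinarith
      have hx0 : ‖a - b‖ ^ 2 = 0 := le_antisymm hx (sq_nonneg _)
      have hn : ‖a - b‖ = 0 := by
        have := sq_eq_zero_iff.mp hx0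
        exact this
      rwa [norm_eq_zero, sub_eq_zero] at hn
    -- surjectivity of A via Lax-Milgram and Riesz representation
    have hAsurj : Function.Surjective A := by
      intro f
      obtain ⟨y, hy⟩ := (InnerProductSpace.toDual ℝ V).surjective f
      obtain ⟨x, hx⟩ := hcoer.continuousLinearEquivOfBilin.surjective y
      refine ⟨x, ?_⟩
      ext u
      have := hcoer.continuousLinearEquivOfBilin_apply x u
      rw [hx] at this
      rw [← hy]
      simpa [InnerProductSpace.toDual_apply_apply] using this.symm
    -- the continuous linear equivalence
    let Aeq : V ≃L[ℝ] (V →L[ℝ] ℝ) :=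
      ContinuousLinearEquiv.ofBijective A
        (LinearMap.ker_eq_bot.mpr hAinj)
        (LinearMap.range_eq_top.mpr hAsurj)
    have hAeq : ∀ u : V, Aeq u = A u := fun u => rfl
    have hAeqs : ∀ ξ, A (Aeq.symm ξ) = ξ := fun ξ => by
      rw [← hAeq]; exact Aeq.apply_symm_apply ξ
    refine ⟨Aeq.symm.toContinuousLinearMap, ?_, ?_, ?_, ?_⟩
    · -- HasFDerivAt R Aeq.symm v
      have hRdiff : ContinuousAt R v := by
        have hlip : LipschitzWith ⟨ε⁻¹, (inv_pos.mpr hε).le⟩ R := by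
          refine LipschitzWith.of_dist_le_mul fun a b => ?_
          simp only [dist_eq_norm]; exact h1 a b
        exact hlip.continuous.continuousAt
      have hQder : HasFDerivAt Q (Aeq : V →L[ℝ] (V →L[ℝ] ℝ)) (R v) := by
        have hF : HasFDerivAt F (fderiv ℝ F (R v)) (R v) :=
          (hFdiff (R v)).hasFDerivAt
        have hBd : HasFDerivAt (fun w : V => ε • B w) (ε • B) (R v) :=
          (B.hasFDerivAt (x := R v)).const_smul ε
        have : HasFDerivAt (fun w : V => F w + ε • B w) A (R v) := hF.add hBd
        have hQfun : Q = fun w : V => F w + ε • B w := funext hQ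
        rw [hQfun]
        exact this
      exact HasFDerivAt.of_local_left_inverse hRdiff hQder
        (Filter.Eventually.of_forall hQR)
    · intro ξ
      exact hAeqs ξ
    · intro u
      exact Aeq.symm_apply_apply u
    · intro ξ
      set d : V := Aeq.symm ξ
      have hle : ε * ‖d‖ ^ 2 ≤ ξ d := by
        have := hAcoer d
        rwa [hAeqs ξ] at this
      have hle2 : ξ d ≤ ‖ξ‖ * ‖d‖ := (Real.le_norm_self _).trans (ξ.le_opNorm d)
      show ‖d‖ ≤ ε⁻¹ * ‖ξ‖
      rcases eq_or_lt_of_le (norm_nonneg d) with h | h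
      · rw [← h]; positivity
      · have hεd : ε * ‖d‖ ≤ ‖ξ‖ := by nlinarith
        calc ‖d‖ = ε⁻¹ * (ε * ‖d‖) := by field_simp
          _ ≤ ε⁻¹ * ‖ξ‖ :=
            mul_le_mul_of_nonneg_left hεd (inv_pos.mpr hε).le
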